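/- arXiv:math/0404370 — 3 statements merged into one kernel-verified Lean document; each statement's English description precedes it below -/
import Mathlib

section
/- Let M be a loopless matroid on a finite ground set E and let ω ∈ ℝ^E. Then there exists an M-ultrametric u* ∈ B̃(M) with u*_e ≤ ω_e for all e ∈ E, such that every M-ultrametric u ∈ B̃(M) with u_e ≤ ω_e for all e ∈ E satisfies u_e ≤ u*_e for all e ∈ E. (In particular, there is a componentwise greatest M-ultrametric below ω, called the subdominant M-ultrametric ω^M.) -/
open scoped Classical

variable {α : Type*}

/-- The ω-weight of a set of elements: the sum of ω over the set. -/
noncomputable def wSum (ω : α → ℝ) (B : Set α) : ℝ := ∑ᶠ e ∈ B, ω e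

/-- `B` is an ω-minimum basis of `M`: a basis whose ω-weight is minimum among all bases. -/
def IsMinBase [Fintype α] (M : Matroid α) (ω : α → ℝ) (B : Set α) : Prop :=
  M.IsBase B ∧ ∀ B' : Set α, M.IsBase B' → wSum ω B ≤ wSum ω B'

/-- `ω` lies in the Bergman fan of `M`: every element lies in some ω-minimum basis. -/
def InBergmanFan [Fintype α] (M : Matroid α) (ω : α → ℝ) : Prop :=
  ∀ e : α, ∃ B : Set α, IsMinBase M ω B ∧ e ∈ B

/-- `C` is a circuit of `M`: a minimal dependent set. -/
def IsCircuit (M : Matroid α) (C : Set α) : Prop := Minimal M.Dep C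

/-- A cocircuit of `M` is a circuit of the dual matroid `M✶`. -/
def IsCocircuit (M : Matroid α) (C : Set α) : Prop := IsCircuit M✶ C

/-- Auxiliary criterion: in every circuit, the maximum of `u` is attained at least twice. -/
def Crit (M : Matroid α) (u : α → ℝ) : Prop :=
  ∀ C : Set α, IsCircuit M C →
    ∃ e f : α, (e ∈ C ∧ f ∈ C ∧ e ≠ f) ∧ (u e = u f ∧ ∀ g ∈ C, u g ≤ u e)

lemma wSum_insert [Fintype α] (ω : α → ℝ) {S : Set α} {e : α} (he : e ∉ S) :
    wSum ω (insert e S) = ω e + wSum ω S := by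
  rw [wSum, wSum, Set.insert_eq,
    finsum_mem_union (Set.disjoint_singleton_left.mpr he) (Set.finite_singleton e) S.toFinite,
    finsum_mem_singleton]

lemma wSum_exchange [Fintype α] (ω : α → ℝ) {B : Set α} {e f : α}
    (he : e ∉ B) (hf : f ∈ B) :
    wSum ω (insert e (B \ {f})) = wSum ω B + ω e - ω f := by
  have hB : B = insert f (B \ {f}) := by
    rw [Set.insert_diff_singleton, Set.insert_eq_of_mem hf]
  have h1 : wSum ω B = ω f + wSum ω (B \ {f}) := by
    conv_lhs => rw [hB]
    exact wSum_insert ω (by simp)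
  have h2 : wSum ω (insert e (B \ {f})) = ω e + wSum ω (B \ {f}) :=
    wSum_insert ω (by simp [he])
  rw [h1, h2]; ring

lemma wSum_coe [Fintype α] (ω : α → ℝ) (t : Finset α) :
    wSum ω ↑t = ∑ x ∈ t, ω x := by
  rw [wSum, finsum_mem_coe_finset]

lemma exists_minBase [Fintype α] (M : Matroid α) (ω : α → ℝ) : ∃ B, IsMinBase M ω B := by
  obtain ⟨B0, hB0⟩ := M.exists_isBase
  let s : Finset (Finset α) := Finset.univ.filter (fun t => M.IsBase ↑t)
  have hs : s.Nonempty := ⟨B0.toFinset, by simp [s, Set.coe_toFinset, hB0]⟩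
  obtain ⟨t, hts, hmin⟩ := Finset.exists_min_image s (fun t => wSum ω ↑t) hs
  refine ⟨↑t, by simpa [s] using hts, fun B' hB' => ?_⟩
  have h := hmin B'.toFinset (by simp [s, Set.coe_toFinset, hB'])
  simpa [Set.coe_toFinset] using h

lemma circuit_indep_diff {M : Matroid α} {C : Set α} (hC : IsCircuit M C) {f : α} (hf : f ∈ C) :
    M.Indep (C \ {f}) := by
  by_contra h
  have hdep : M.Dep (C \ {f}) := ⟨h, Set.diff_subset.trans hC.1.subset_ground⟩
  exact (hC.2 hdep Set.diff_subset hf).2 rfl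

lemma circuit_mem_closure {M : Matroid α} {C : Set α} (hC : IsCircuit M C) {e : α} (he : e ∈ C) :
    e ∈ M.closure (C \ {e}) := by
  have hind := circuit_indep_diff hC he
  have hdep : M.Dep (insert e (C \ {e})) := by
    rw [Set.insert_diff_singleton, Set.insert_eq_of_mem he]
    exact hC.1
  rw [hind.insert_dep_iff] at hdep
  exact hdep.1

lemma exists_circuit_subset_aux [Fintype α] (M : Matroid α) :
    ∀ n (D : Set α), D.toFinset.card ≤ n → M.Dep D → ∃ C, C ⊆ D ∧ IsCircuit M C := by
  intro n
  induction n with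
  | zero =>
    intro D hcard hD
    obtain ⟨x, hx⟩ := hD.nonempty
    have hx' : x ∈ D.toFinset := by simpa using hx
    have := Finset.card_pos.mpr ⟨x, hx'⟩
    omega
  | succ n ih =>
    intro D hcard hD
    by_cases h : ∀ D', M.Dep D' → D' ⊆ D → D ⊆ D'
    · exact ⟨D, subset_rfl, ⟨hD, fun D' hD' hsub => h D' hD' hsub⟩⟩
    · push_neg at h
      obtain ⟨D', hD', hsub, hnsub⟩ := h
      have hne : D' ≠ D := fun hh => hnsub (hh ▸ subset_rfl)
      have hss : D' ⊂ D := hsub.ssubset_of_ne hne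
      have hlt : D'.toFinset.card < D.toFinset.card :=
        Finset.card_lt_card (Set.toFinset_ssubset_toFinset.mpr hss)
      obtain ⟨C, hCD', hC⟩ := ih D' (by omega) hD'
      exact ⟨C, hCD'.trans hsub, hC⟩

lemma exists_circuit_subset [Fintype α] {M : Matroid α} {D : Set α} (hD : M.Dep D) :
    ∃ C, C ⊆ D ∧ IsCircuit M C :=
  exists_circuit_subset_aux M D.toFinset.card D le_rfl hD

/-- Exchange: if `C` is a circuit contained in `insert e B` with `B` a base and `e ∉ B`,
then for any `f ∈ C` other than `e`, `insert e (B \ {f})` is a base. -/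
lemma insert_exchange_base [Fintype α] {M : Matroid α} (hE : M.E = Set.univ) {B C : Set α}
    {e f : α} (hB : M.IsBase B) (heB : e ∉ B) (hC : IsCircuit M C) (hCB : C ⊆ insert e B)
    (hfC : f ∈ C) (hfe : f ≠ e) : M.IsBase (insert e (B \ {f})) := by
  have hground : ∀ S : Set α, S ⊆ M.E := by rw [hE]; exact fun S => Set.subset_univ S
  have hfB : f ∈ B := by
    rcases hCB hfC with h | h
    · exact absurd h hfe
    · exact h
  have hfcl : f ∈ M.closure (C \ {f}) := circuit_mem_closure hC hfC
  have hsub : C \ {f} ⊆ insert e (B \ {f}) := by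
    rintro x ⟨hxC, hxf⟩
    rcases hCB hxC with h | h
    · exact Or.inl h
    · exact Or.inr ⟨h, hxf⟩
  have hf2 : f ∈ M.closure (insert e (B \ {f})) := M.closure_subset_closure hsub hfcl
  have hBsub : B ⊆ M.closure (insert e (B \ {f})) := by
    intro x hx
    by_cases hxf : x = f
    · exact hxf ▸ hf2
    · exact M.subset_closure _ (hground _) (Or.inr ⟨hx, hxf⟩)
  have hspan : M.E ⊆ M.closure (insert e (B \ {f})) := by
    rw [← hB.closure_eq]
    exact Matroid.closure_subset_closure_of_subset_closure hBsub
  obtain ⟨I, hI⟩ := M.exists_isBasis (insert e (B \ {f})) (hground _)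
  have hIbase : M.IsBase I :=
    hI.indep.isBase_of_ground_subset_closure (by rw [hI.closure_eq_closure]; exact hspan)
  have hcard : (insert e (B \ {f})).ncard ≤ I.ncard := by
    have h1 : (insert e (B \ {f})).ncard = (B \ {f}).ncard + 1 :=
      Set.ncard_insert_of_notMem (by simp [heB]) (Set.toFinite _)
    have h2 : (B \ {f}).ncard + 1 = B.ncard :=
      Set.ncard_diff_singleton_add_one hfB (Set.toFinite _)
    rw [hIbase.ncard_eq_ncard_of_isBase hB]
    omega
  have heq := Set.eq_of_subset_of_ncard_le hI.subset hcard (Set.toFinite _)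
  rwa [← heq]

lemma fan_to_crit [Fintype α] {M : Matroid α} (hE : M.E = Set.univ) {ω : α → ℝ}
    (h : InBergmanFan M ω) : Crit M ω := by
  intro C hC
  obtain ⟨e, heC, hmax⟩ := Set.exists_max_image C ω C.toFinite hC.1.nonempty
  obtain ⟨B, ⟨hB, hBmin⟩, heB⟩ := h e
  have hecl : e ∉ M.closure (B \ {e}) :=
    (Matroid.indep_iff_forall_notMem_closure_diff hB.indep.subset_ground).mp hB.indep heB
  have key : ∃ f, f ∈ C ∧ f ≠ e ∧ f ∉ M.closure (B \ {e}) := by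
    by_contra h'
    push_neg at h'
    have hsub : C \ {e} ⊆ M.closure (B \ {e}) := by
      rintro x ⟨hxC, hxe⟩
      exact h' x hxC hxe
    exact hecl (Matroid.closure_subset_closure_of_subset_closure hsub
      (circuit_mem_closure hC heC))
  obtain ⟨f, hfC, hfe, hfcl⟩ := key
  have hfB : f ∉ B := by
    intro hfB
    exact hfcl (M.subset_closure _ (by rw [hE]; exact Set.subset_univ _) ⟨hfB, hfe⟩)
  have hind : M.Indep (insert f (B \ {e})) := by
    have hBe : M.Indep (B \ {e}) := hB.indep.subset Set.diff_subset
    exact ((hBe.notMem_closure_iff (by rw [hE]; trivial)).mp hfcl).1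
  have hB' : M.IsBase (insert f (B \ {e})) := hB.exchange_isBase_of_indep hfB hind
  have hw := hBmin _ hB'
  rw [wSum_exchange ω hfB heB] at hw
  have heq : ω e = ω f := le_antisymm (by linarith) (hmax f hfC)
  exact ⟨e, f, ⟨heC, hfC, fun hh => hfe hh.symm⟩, heq, hmax⟩

lemma crit_to_fan [Fintype α] {M : Matroid α} (hE : M.E = Set.univ) {ω : α → ℝ}
    (h : Crit M ω) : InBergmanFan M ω := by
  intro e
  obtain ⟨B, hBmin⟩ := exists_minBase M ω
  by_cases heB : e ∈ B
  · exact ⟨B, hBmin, heB⟩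
  obtain ⟨hB, hmin⟩ := hBmin
  have hdep : M.Dep (insert e B) := hB.insert_dep ⟨by rw [hE]; trivial, heB⟩
  obtain ⟨C, hCB, hC⟩ := exists_circuit_subset hdep
  have heC : e ∈ C := by
    by_contra heC
    have hCB' : C ⊆ B := fun x hx => (hCB hx).resolve_left (fun hh => heC (hh ▸ hx))
    exact hC.1.not_indep (hB.indep.subset hCB')
  have hwt : ∀ f ∈ C, f ≠ e → ω f ≤ ω e := by
    intro f hfC hfe
    have hbase := insert_exchange_base hE hB heB hC hCB hfC hfe
    have hw := hmin _ hbase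
    have hfB : f ∈ B := by
      rcases hCB hfC with hh | hh
      · exact absurd hh hfe
      · exact hh
    rw [wSum_exchange ω heB hfB] at hw
    linarith
  obtain ⟨a, b, ⟨haC, hbC, hab⟩, hval, hmax⟩ := h C hC
  obtain ⟨g, hgC, hge, hgmax⟩ : ∃ g, g ∈ C ∧ g ≠ e ∧ ∀ x ∈ C, ω x ≤ ω g := by
    by_cases hae : a = e
    · exact ⟨b, hbC, fun hh => hab (hae.trans hh.symm), fun x hx => (hmax x hx).trans_eq hval⟩
    · exact ⟨a, haC, hae, hmax⟩
  have h1 : ω g ≤ ω e := hwt g hgC hge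
  have h2 : ω e ≤ ω g := hgmax e heC
  have hbase := insert_exchange_base hE hB heB hC hCB hgC hge
  have hgB : g ∈ B := by
    rcases hCB hgC with hh | hh
    · exact absurd hh hge
    · exact hh
  refine ⟨insert e (B \ {g}), ⟨hbase, fun B' hB' => ?_⟩, Set.mem_insert _ _⟩
  rw [wSum_exchange ω heB hgB]
  have := hmin B' hB'
  linarith

lemma crit_sup_aux {M : Matroid α} {u v : α → ℝ} {C : Set α} (hC : IsCircuit M C)
    {x : α} (hxC : x ∈ C) (hxmax : ∀ g ∈ C, (u ⊔ v) g ≤ (u ⊔ v) x) (hcase : (u ⊔ v) x = u x)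
    (hu : Crit M u) :
    ∃ e f : α, (e ∈ C ∧ f ∈ C ∧ e ≠ f) ∧
      ((u ⊔ v) e = (u ⊔ v) f ∧ ∀ g ∈ C, (u ⊔ v) g ≤ (u ⊔ v) e) := by
  obtain ⟨a, b, ⟨haC, hbC, hab⟩, hval, hmax⟩ := hu C hC
  have key : ∀ g ∈ C, (u ⊔ v) g ≤ (u ⊔ v) a := by
    intro g hg
    calc (u ⊔ v) g ≤ (u ⊔ v) x := hxmax g hg
      _ = u x := hcase
      _ ≤ u a := hmax x hxC
      _ ≤ (u ⊔ v) a := le_max_left _ _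
  have ha' : (u ⊔ v) a = (u ⊔ v) x := le_antisymm (hxmax a haC) (key x hxC)
  have hb' : (u ⊔ v) x ≤ (u ⊔ v) b := by
    calc (u ⊔ v) x = u x := hcase
      _ ≤ u a := hmax x hxC
      _ = u b := hval
      _ ≤ (u ⊔ v) b := le_max_left _ _
  have hb'' : (u ⊔ v) b = (u ⊔ v) x := le_antisymm (hxmax b hbC) hb'
  exact ⟨a, b, ⟨haC, hbC, hab⟩, by rw [ha', hb''], key⟩

lemma crit_sup [Fintype α] {M : Matroid α} {u v : α → ℝ} (hu : Crit M u) (hv : Crit M v) :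
    Crit M (u ⊔ v) := by
  intro C hC
  obtain ⟨x, hxC, hxmax⟩ := Set.exists_max_image C (u ⊔ v) C.toFinite hC.1.nonempty
  rcases le_total (v x) (u x) with hcase | hcase
  · exact crit_sup_aux hC hxC hxmax (sup_eq_left.mpr hcase) hu
  · rw [sup_comm u v] at hxmax ⊢
    exact crit_sup_aux hC hxC hxmax (sup_eq_left.mpr hcase) hv

lemma crit_const {M : Matroid α} (hloopless : ∀ e : α, M.Indep {e}) (c : ℝ) :
    Crit M (fun _ => c) := by
  intro C hC
  obtain ⟨e, heC⟩ := hC.1.nonempty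
  have hf : ∃ f ∈ C, f ≠ e := by
    by_contra h'
    push_neg at h'
    have hCe : C = {e} := Set.eq_singleton_iff_unique_mem.mpr ⟨heC, fun x hx => h' x hx⟩
    exact hC.1.not_indep (hCe ▸ hloopless e)
  obtain ⟨f, hfC, hfe⟩ := hf
  exact ⟨e, f, ⟨heC, hfC, fun hh => hfe hh.symm⟩, rfl, fun _ _ => le_rfl⟩

lemma crit_closed [Fintype α] (M : Matroid α) : IsClosed {u : α → ℝ | Crit M u} := by
  have heq : {u : α → ℝ | Crit M u} =
      ⋂ (C : Set α), ⋂ (_ : IsCircuit M C), ⋃ (e : α), ⋃ (f : α),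
        ⋃ (_ : e ∈ C ∧ f ∈ C ∧ e ≠ f),
          ({u : α → ℝ | u e = u f} ∩
            ⋂ (g : α), ⋂ (_ : g ∈ C), {u : α → ℝ | u g ≤ u e}) := by
    ext u
    simp only [Set.mem_setOf_eq, Set.mem_iInter, Set.mem_iUnion, Set.mem_inter_iff, Crit]
    constructor
    · intro h C hC
      obtain ⟨e, f, h1, h2, h3⟩ := h C hC
      exact ⟨e, f, h1, h2, fun g hg => h3 g hg⟩
    · intro h C hC
      obtain ⟨e, f, h1, h2, h3⟩ := h C hC
      exact ⟨e, f, h1, h2, fun g hg => h3 g hg⟩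
  rw [heq]
  refine isClosed_iInter fun C => isClosed_iInter fun _ => ?_
  refine isClosed_iUnion_of_finite fun e => isClosed_iUnion_of_finite fun f => ?_
  refine isClosed_iUnion_of_finite fun _ => ?_
  exact (isClosed_eq (continuous_apply e) (continuous_apply f)).inter
    (isClosed_iInter fun g => isClosed_iInter fun _ =>
      isClosed_le (continuous_apply g) (continuous_apply e))

/-- For a loopless matroid M on a finite ground set and any ω ∈ ℝ^E,
there is a componentwise greatest M-ultrametric below ω (the subdominant M-ultrametric). -/
theorem stmt2 [Fintype α] (M : Matroid α) (hE : M.E = Set.univ)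
    (hloopless : ∀ e : α, M.Indep {e}) (ω : α → ℝ) :
    ∃ usub : α → ℝ, InBergmanFan M usub ∧ (∀ e, usub e ≤ ω e) ∧
      ∀ u : α → ℝ, InBergmanFan M u → (∀ e, u e ≤ ω e) → ∀ e, u e ≤ usub e := by
  rcases isEmpty_or_nonempty α with hα | hα
  · exact ⟨ω, fun e => (IsEmpty.false e).elim, fun e => le_rfl,
      fun u hu hle e => (IsEmpty.false e).elim⟩
  set c : ℝ := Finset.univ.inf' Finset.univ_nonempty ω with hc
  set u0 : α → ℝ := fun _ => c with hu0
  have hu0ω : u0 ≤ ω := fun e => Finset.inf'_le ω (Finset.mem_univ e)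
  have hcrit0 : Crit M u0 := crit_const hloopless c
  set S : Set (α → ℝ) := {u | Crit M u} ∩ Set.Icc u0 ω with hS
  have hScomp : IsCompact S := isCompact_Icc.inter_left (crit_closed M)
  have hSne : S.Nonempty := ⟨u0, hcrit0, Set.mem_Icc.mpr ⟨le_rfl, hu0ω⟩⟩
  have hv : ∀ e : α, ∃ w ∈ S, ∀ u ∈ S, u e ≤ w e := by
    intro e
    obtain ⟨w, hwS, hwmax⟩ := hScomp.exists_isMaxOn hSne (continuous_apply e).continuousOn
    exact ⟨w, hwS, fun u hu => isMaxOn_iff.mp hwmax u hu⟩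
  choose v hvS hvmax using hv
  set usub : α → ℝ := Finset.univ.sup' Finset.univ_nonempty v with husub
  have hcrit : Crit M usub :=
    Finset.sup'_induction _ v (fun a ha b hb => crit_sup ha hb) (fun i _ => (hvS i).1)
  have hle : usub ≤ ω := Finset.sup'_le _ _ fun i _ => (hvS i).2.2
  refine ⟨usub, crit_to_fan hE hcrit, fun e => hle e, ?_⟩
  intro u hu huω e
  have hu'S : (u ⊔ u0) ∈ S :=
    ⟨crit_sup (fan_to_crit hE hu) hcrit0,
      Set.mem_Icc.mpr ⟨le_sup_right, sup_le (fun x => huω x) hu0ω⟩⟩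
  calc u e ≤ (u ⊔ u0) e := le_sup_left (α := ℝ)
    _ ≤ v e e := hvmax e _ hu'S
    _ ≤ usub e := by
        have hvle : v e ≤ usub := Finset.le_sup' v (Finset.mem_univ e)
        exact hvle e
end

section
/- Let M be a loopless matroid on a finite ground set E, let ω ∈ ℝ^E, and let B be an ω-minimum basis of M. Then for every e ∈ B, the subdominant M-ultrametric satisfies ω^M_e = ω_e. -/
open scoped Classical

variable {α : Type*}

lemma wSum_eq_sum [Fintype α] (ω : α → ℝ) (S : Set α) :
    wSum ω S = ∑ x ∈ (Set.toFinite S).toFinset, ω x := by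
  rw [wSum, ← finsum_mem_coe_finset, Set.Finite.coe_toFinset]

lemma wSum_congr [Fintype α] {u v : α → ℝ} {S : Set α} (h : ∀ x ∈ S, u x = v x) :
    wSum u S = wSum v S := by
  rw [wSum_eq_sum, wSum_eq_sum]
  exact Finset.sum_congr rfl fun x hx => h x ((Set.Finite.mem_toFinset _).mp hx)

lemma wSum_swap [Fintype α] (u : α → ℝ) {S : Set α} {x y : α} (hx : x ∉ S) (hy : y ∈ S) :
    wSum u (insert x (S \ {y})) = wSum u S - u y + u x := by
  classical
  rw [wSum_eq_sum, wSum_eq_sum]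
  have h1 : (Set.toFinite (insert x (S \ {y}))).toFinset
      = insert x (((Set.toFinite S).toFinset).erase y) := by
    ext a
    simp only [Set.Finite.mem_toFinset, Set.mem_insert_iff, Set.mem_diff,
      Set.mem_singleton_iff, Finset.mem_insert, Finset.mem_erase]
    tauto
  have h2 : u y + ∑ a ∈ ((Set.toFinite S).toFinset).erase y, u a
      = ∑ a ∈ (Set.toFinite S).toFinset, u a :=
    Finset.add_sum_erase _ u ((Set.Finite.mem_toFinset _).mpr hy)
  rw [h1, Finset.sum_insert (by
    simp only [Finset.mem_erase, Set.Finite.mem_toFinset]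
    exact fun h => hx h.2)]
  linarith

/-- For a loopless matroid M, ω ∈ ℝ^E and an ω-minimum basis B:
the subdominant M-ultrametric agrees with ω on every element of B. -/
theorem stmt7 [Fintype α] (M : Matroid α) (hE : M.E = Set.univ)
    (hloopless : ∀ e : α, M.Indep {e}) (ω usub : α → ℝ)
    (h1 : InBergmanFan M usub) (h2 : ∀ e, usub e ≤ ω e)
    (h3 : ∀ u : α → ℝ, InBergmanFan M u → (∀ e, u e ≤ ω e) → ∀ e, u e ≤ usub e)
    (B : Set α) (hB : IsMinBase M ω B) :
    ∀ e ∈ B, usub e = ω e := by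
  classical
  obtain ⟨hBbase, hBmin⟩ := hB
  have hEmem : ∀ x : α, x ∈ M.E := fun x => by rw [hE]; exact Set.mem_univ x
  have hEsub : ∀ S : Set α, S ⊆ M.E := fun S x _ => hEmem x
  set X : α → Set α := fun f => {g | g ∈ B ∧ M.IsBase (insert f (B \ {g}))} with hXdef
  -- key exchange lemma
  have key : ∀ f, f ∉ B → ∀ I : Set α, M.Indep I → f ∈ I → I ⊆ insert f B →
      ∃ g, g ∈ X f ∧ g ∉ I := by
    intro f hf I hI hfI hIB
    obtain ⟨B₃, hB₃, hIB₃, hB₃sub⟩ := hI.exists_isBase_subset_union_isBase hBbase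
    have hB₃sub' : B₃ ⊆ insert f B :=
      hB₃sub.trans (Set.union_subset hIB (Set.subset_insert _ _))
    have hfB₃ : f ∈ B₃ := hIB₃ hfI
    have hdiff : B₃ \ B = {f} := by
      apply Set.Subset.antisymm
      · intro x hx
        rcases hB₃sub' hx.1 with h | h
        · exact h
        · exact absurd h hx.2
      · intro x hx
        rcases hx with rfl
        exact ⟨hfB₃, hf⟩
    have hcard : (B \ B₃).encard = 1 := by
      rw [hBbase.encard_diff_comm hB₃, hdiff, Set.encard_singleton]
    obtain ⟨g, hg⟩ := Set.encard_eq_one.mp hcard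
    have hgmem : g ∈ B \ B₃ := by rw [hg]; exact Set.mem_singleton g
    have hB₃eq : B₃ = insert f (B \ {g}) := by
      apply Set.Subset.antisymm
      · intro x hx
        rcases hB₃sub' hx with rfl | hxB
        · exact Set.mem_insert _ _
        · refine Set.mem_insert_of_mem _ ⟨hxB, ?_⟩
          intro hxg
          rcases hxg
          exact hgmem.2 hx
      · intro x hx
        rcases hx with rfl | ⟨hxB, hxg⟩
        · exact hfB₃
        · by_contra hxB₃
          have : x ∈ B \ B₃ := ⟨hxB, hxB₃⟩
          rw [hg] at this
          exact hxg this
    refine ⟨g, ⟨hgmem.1, ?_⟩, fun hgI => hgmem.2 (hIB₃ hgI)⟩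
    rw [← hB₃eq]; exact hB₃
  have hXne : ∀ f, f ∉ B → (X f).Nonempty := by
    intro f hf
    obtain ⟨g, hg, -⟩ := key f hf {f} (hloopless f) (Set.mem_singleton f)
      (by intro x hx; rcases hx; exact Set.mem_insert _ _)
    exact ⟨g, hg⟩
  -- f is in the closure of X f
  have hclX : ∀ f, f ∉ B → f ∈ M.closure (X f) := by
    intro f hf
    by_contra hcl
    have hXf_indep : M.Indep (X f) := hBbase.indep.subset (fun g hg => hg.1)
    have hins : M.Indep (insert f (X f)) := by
      rw [hXf_indep.insert_indep_iff_of_notMem (fun h => hf h.1)]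
      exact ⟨hEmem f, hcl⟩
    obtain ⟨g, hgX, hgI⟩ := key f hf (insert f (X f)) hins (Set.mem_insert _ _)
      (Set.insert_subset_insert (fun g hg => hg.1))
    exact hgI (Set.mem_insert_of_mem _ hgX)
  -- the new weight function
  set u : α → ℝ := fun f => if f ∈ B then ω f else sSup (ω '' X f) with hu
  have huB : ∀ g ∈ B, u g = ω g := fun g hg => if_pos hg
  have hufXf : ∀ f, f ∉ B → u f = sSup (ω '' X f) := fun f hf => if_neg hf
  have hfin : ∀ f, (ω '' X f).Finite := fun f => Set.toFinite _
  have hle_sup : ∀ f, f ∉ B → ∀ g ∈ X f, ω g ≤ u f := by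
    intro f hf g hg
    rw [hufXf f hf]
    exact le_csSup (hfin f).bddAbove ⟨g, hg, rfl⟩
  have hsup_mem : ∀ f, f ∉ B → ∃ g ∈ X f, ω g = u f := by
    intro f hf
    obtain ⟨g, hg, hge⟩ := ((hXne f hf).image ω).csSup_mem (hfin f)
    exact ⟨g, hg, by rw [hge, hufXf f hf]⟩
  -- u ≤ ω
  have hule : ∀ x, u x ≤ ω x := by
    intro x
    by_cases hx : x ∈ B
    · rw [huB x hx]
    · rw [hufXf x hx]
      apply csSup_le ((hXne x hx).image ω)
      rintro _ ⟨g, hg, rfl⟩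
      have hswap := wSum_swap ω (S := B) hx hg.1
      have hmin := hBmin _ hg.2
      linarith
  have huBW : wSum u B = wSum ω B := wSum_congr huB
  -- every basis has u-weight at least W
  have main : ∀ n : ℕ, ∀ B' : Set α, M.IsBase B' → (B' \ B).ncard = n →
      wSum ω B ≤ wSum u B' := by
    intro n
    induction n with
    | zero =>
      intro B' hB' hcard
      have hempty : B' \ B = ∅ := (Set.ncard_eq_zero (Set.toFinite _)).mp hcard
      have hsub : B' ⊆ B := Set.diff_eq_empty.mp hempty
      have : B' = B := hB'.eq_of_subset_isBase hBbase hsub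
      rw [this, huBW]
    | succ n ih =>
      intro B' hB' hcard
      have hne : (B' \ B).Nonempty := Set.nonempty_of_ncard_ne_zero (by omega)
      obtain ⟨f, hf⟩ := hne
      have hIdiff : M.Indep (B' \ {f}) := hB'.indep.subset Set.diff_subset
      have hf_not_cl : f ∉ M.closure (B' \ {f}) := by
        rw [hIdiff.notMem_closure_iff_of_notMem (by simp) (hEmem f)]
        have heq : insert f (B' \ {f}) = B' := by
          rw [Set.insert_diff_singleton, Set.insert_eq_of_mem hf.1]
        rw [heq]
        exact hB'.indep
      have hXsub : ¬ X f ⊆ M.closure (B' \ {f}) := by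
        intro hsub
        have h1 := M.closure_subset_closure hsub
        rw [M.closure_closure] at h1
        exact hf_not_cl (h1 (hclX f hf.2))
      obtain ⟨g, hgX, hgcl⟩ := Set.not_subset.mp hXsub
      have hgB' : g ∉ B' := by
        intro hgB'
        have hgf : g ≠ f := fun h => hf.2 (h ▸ hgX.1)
        exact hgcl (M.subset_closure (B' \ {f}) (hEsub _) ⟨hgB', hgf⟩)
      have hindep : M.Indep (insert g (B' \ {f})) := by
        rw [hIdiff.insert_indep_iff_of_notMem (fun h => hgB' h.1)]
        exact ⟨hEmem g, hgcl⟩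
      have hB'' : M.IsBase (insert g (B' \ {f})) := hB'.exchange_isBase_of_indep hgB' hindep
      have hdiffeq : (insert g (B' \ {f})) \ B = (B' \ B) \ {f} := by
        rw [Set.insert_diff_of_mem _ hgX.1, Set.diff_diff_comm]
      have hcard' : ((insert g (B' \ {f})) \ B).ncard = n := by
        rw [hdiffeq, Set.ncard_diff_singleton_of_mem hf, hcard]
        omega
      have hW := ih _ hB'' hcard'
      have hswap := wSum_swap u (S := B') hgB' hf.1
      have hug : u g ≤ u f := by
        rw [huB g hgX.1]
        exact hle_sup f hf.2 g hgX
      linarith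
  -- u is in the Bergman fan
  have hfan : InBergmanFan M u := by
    intro x
    by_cases hx : x ∈ B
    · refine ⟨B, ⟨hBbase, fun B' hB' => ?_⟩, hx⟩
      rw [huBW]
      exact main _ B' hB' rfl
    · obtain ⟨g, hg, hge⟩ := hsup_mem x hx
      refine ⟨insert x (B \ {g}), ⟨hg.2, fun B' hB' => ?_⟩, Set.mem_insert _ _⟩
      have hswap := wSum_swap u (S := B) hx hg.1
      have hugg : u g = ω g := huB g hg.1
      have : wSum u (insert x (B \ {g})) = wSum ω B := by
        rw [hswap, huBW, hugg, hge]; ring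
      rw [this]
      exact main _ B' hB' rfl
  -- conclude
  intro e he
  have h4 := h3 u hfan hule e
  rw [huB e he] at h4
  exact le_antisymm (h2 e) h4
end

section
/- Let X be a finite set with at least two elements, let ω be a dissimilarity map on X, let ω_U be its subdominant ultrametric, and set ε = (1/2) · max_{x ≠ y} (ω(x,y) − ω_U(x,y)). Define ω_U^{+ε} by ω_U^{+ε}(x,y) = ω_U(x,y) + ε for x ≠ y and ω_U^{+ε}(x,x) = 0. Then ω_U^{+ε} is an ultrametric, and it is ℓ∞-optimal: for every ultrametric δ on X, max_{x ≠ y} |ω(x,y) − ω_U^{+ε}(x,y)| ≤ max_{x ≠ y} |ω(x,y) − δ(x,y)|, and moreover max_{x ≠ y} |ω(x,y) − ω_U^{+ε}(x,y)| = ε. -/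
open scoped Classical

variable {X : Type*}

/-- A dissimilarity map on X: a symmetric function vanishing on the diagonal. -/
def IsDissimilarity (δ : X → X → ℝ) : Prop :=
  (∀ x, δ x x = 0) ∧ ∀ x y, δ x y = δ y x

/-- An ultrametric on X: a dissimilarity map satisfying the strong triangle
inequality on pairwise distinct triples. -/
def IsUltrametricMap (δ : X → X → ℝ) : Prop :=
  IsDissimilarity δ ∧
    ∀ x y z : X, x ≠ y → y ≠ z → x ≠ z → δ x z ≤ max (δ x y) (δ y z)

/-- The subdominant ultrametric of ω: for x ≠ y, the minimum over all finite
sequences x = v₀, v₁, …, v_m = y (m ≥ 1) of the largest weight ω(v_{t-1}, v_t)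
of a step of the sequence. -/
noncomputable def subdomUltra (ω : X → X → ℝ) (x y : X) : ℝ :=
  if x = y then 0 else
    sInf {r : ℝ | ∃ (m : ℕ) (hm : 1 ≤ m) (v : ℕ → X), v 0 = x ∧ v m = y ∧
      r = (Finset.Icc 1 m).sup' (Finset.nonempty_Icc.mpr hm)
            (fun t => ω (v (t - 1)) (v t))}

def pathVals (ω : X → X → ℝ) (x y : X) : Set ℝ :=
  {r : ℝ | ∃ (m : ℕ) (hm : 1 ≤ m) (v : ℕ → X), v 0 = x ∧ v m = y ∧
      r = (Finset.Icc 1 m).sup' (Finset.nonempty_Icc.mpr hm)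
            (fun t => ω (v (t - 1)) (v t))}

lemma subdom_eq (ω : X → X → ℝ) {x y : X} (h : x ≠ y) :
    subdomUltra ω x y = sInf (pathVals ω x y) := by
  simp [subdomUltra, pathVals, h]

lemma pathVals_nonempty (ω : X → X → ℝ) (x y : X) : (pathVals ω x y).Nonempty := by
  refine ⟨ω x y, 1, le_refl 1, fun t => if t = 0 then x else y, by simp, by simp, ?_⟩
  simp

lemma pathVals_finite [Fintype X] (ω : X → X → ℝ) (x y : X) : (pathVals ω x y).Finite := by
  refine (Set.finite_range (fun p : X × X => ω p.1 p.2)).subset ?_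
  rintro r ⟨m, hm, v, h0, hmv, rfl⟩
  obtain ⟨t, ht, hts⟩ := Finset.exists_mem_eq_sup' (Finset.nonempty_Icc.mpr hm)
    (fun t => ω (v (t - 1)) (v t))
  exact ⟨(v (t-1), v t), hts.symm⟩

lemma omega_mem_pathVals (ω : X → X → ℝ) (x y : X) : ω x y ∈ pathVals ω x y := by
  refine ⟨1, le_refl 1, fun t => if t = 0 then x else y, by simp, by simp, ?_⟩
  simp

lemma subdom_le [Fintype X] (ω : X → X → ℝ) {x y : X} (h : x ≠ y) :
    subdomUltra ω x y ≤ ω x y := by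
  rw [subdom_eq ω h]
  exact csInf_le (pathVals_finite ω x y).bddBelow (omega_mem_pathVals ω x y)

lemma subdom_mem [Fintype X] (ω : X → X → ℝ) {x y : X} (h : x ≠ y) :
    subdomUltra ω x y ∈ pathVals ω x y := by
  rw [subdom_eq ω h]
  exact (pathVals_nonempty ω x y).csInf_mem (pathVals_finite ω x y)

lemma pathVals_rev (ω : X → X → ℝ) (hsym : ∀ a b, ω a b = ω b a) {x y : X} {r : ℝ}
    (hr : r ∈ pathVals ω x y) : r ∈ pathVals ω y x := by
  obtain ⟨m, hm, v, h0, hmv, rfl⟩ := hr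
  set w : ℕ → X := fun t => v (m - t) with hw
  refine ⟨m, hm, w, by simp [hw, hmv], by simp [hw, h0], ?_⟩
  apply le_antisymm
  · apply Finset.sup'_le
    intro t ht
    rw [Finset.mem_Icc] at ht
    have hs : m + 1 - t ∈ Finset.Icc 1 m := Finset.mem_Icc.mpr (by omega)
    refine le_trans (le_of_eq ?_) (Finset.le_sup' (fun s => ω (w (s-1)) (w s)) hs)
    simp only [hw]
    have e1 : m - (m + 1 - t - 1) = t := by omega
    have e2 : m - (m + 1 - t) = t - 1 := by omega
    rw [e1, e2]
    exact hsym _ _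
  · apply Finset.sup'_le
    intro t ht
    rw [Finset.mem_Icc] at ht
    have hs : m + 1 - t ∈ Finset.Icc 1 m := Finset.mem_Icc.mpr (by omega)
    refine le_trans (le_of_eq ?_) (Finset.le_sup' (fun s => ω (v (s-1)) (v s)) hs)
    simp only [hw]
    have e1 : m - (t - 1) = m + 1 - t := by omega
    have e2 : m + 1 - t - 1 = m - t := by omega
    rw [e1, e2]
    exact hsym _ _

lemma subdom_symm (ω : X → X → ℝ) (hsym : ∀ a b, ω a b = ω b a) (x y : X) :
    subdomUltra ω x y = subdomUltra ω y x := by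
  rcases eq_or_ne x y with rfl | h
  · rfl
  · rw [subdom_eq ω h, subdom_eq ω h.symm]
    congr 1
    ext r
    exact ⟨fun hr => pathVals_rev ω hsym hr, fun hr => pathVals_rev ω hsym hr⟩

lemma subdom_triangle [Fintype X] (ω : X → X → ℝ) {x y z : X}
    (hxy : x ≠ y) (hyz : y ≠ z) (hxz : x ≠ z) :
    subdomUltra ω x z ≤ max (subdomUltra ω x y) (subdomUltra ω y z) := by
  obtain ⟨m1, hm1, v, hv0, hvm, hv⟩ := subdom_mem ω hxy
  obtain ⟨m2, hm2, w, hw0, hwm, hw⟩ := subdom_mem ω hyz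
  set u : ℕ → X := fun t => if t ≤ m1 then v t else w (t - m1) with hu
  have hmem : ((Finset.Icc 1 (m1 + m2)).sup' (Finset.nonempty_Icc.mpr (by omega))
      (fun t => ω (u (t - 1)) (u t))) ∈ pathVals ω x z := by
    refine ⟨m1 + m2, by omega, u, ?_, ?_, rfl⟩
    · simp [hu, hv0]
    · simp only [hu]
      rw [if_neg (by omega)]
      simpa using hwm
  rw [subdom_eq ω hxz]
  refine le_trans (csInf_le (pathVals_finite ω x z).bddBelow hmem) ?_
  apply Finset.sup'_le
  intro t ht
  rw [Finset.mem_Icc] at ht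
  rcases le_or_gt t m1 with h | h
  · refine le_trans (le_of_eq ?_) (le_max_of_le_left (le_trans
      (Finset.le_sup' (fun t => ω (v (t-1)) (v t)) (Finset.mem_Icc.mpr ⟨ht.1, h⟩)) hv.ge))
    simp only [hu]
    rw [if_pos (by omega), if_pos h]
  · have h1 : u t = w (t - m1) := by simp only [hu]; rw [if_neg (by omega)]
    have h2 : u (t - 1) = w (t - m1 - 1) := by
      simp only [hu]
      rcases le_or_gt (t - 1) m1 with h' | h'
      · rw [if_pos h']
        have : t - 1 = m1 := by omega
        have : t - m1 - 1 = 0 := by omega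
        rw [this, hw0, ‹t - 1 = m1›, hvm]
      · rw [if_neg (by omega)]
        congr 1
        omega
    rw [h1, h2]
    exact le_max_of_le_right (le_trans
      (Finset.le_sup' (fun t => ω (w (t-1)) (w t)) (Finset.mem_Icc.mpr (by omega))) hw.ge)

lemma ultra_path {δ : X → X → ℝ} (hδ : IsUltrametricMap δ) (g : X → X → ℝ)
    (hg : ∀ a b, a ≠ b → δ a b ≤ g a b) :
    ∀ (m : ℕ) (hm : 1 ≤ m), ∀ v : ℕ → X, v 0 ≠ v m →
      δ (v 0) (v m) ≤ (Finset.Icc 1 m).sup' (Finset.nonempty_Icc.mpr hm)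
        (fun t => g (v (t - 1)) (v t)) := by
  intro m hm
  induction m, hm using Nat.le_induction with
  | base =>
    intro v hv
    simpa using hg _ _ hv
  | succ m hm ih =>
    intro v hv
    have hmono : (Finset.Icc 1 m).sup' (Finset.nonempty_Icc.mpr hm)
        (fun t => g (v (t - 1)) (v t)) ≤ (Finset.Icc 1 (m+1)).sup'
        (Finset.nonempty_Icc.mpr (by omega)) (fun t => g (v (t - 1)) (v t)) := by
      apply Finset.sup'_le
      intro t ht
      rw [Finset.mem_Icc] at ht
      exact Finset.le_sup' (fun t => g (v (t - 1)) (v t)) (Finset.mem_Icc.mpr ⟨ht.1, by omega⟩)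
    have hlast : g (v m) (v (m+1)) ≤ (Finset.Icc 1 (m+1)).sup'
        (Finset.nonempty_Icc.mpr (by omega)) (fun t => g (v (t - 1)) (v t)) := by
      have := Finset.le_sup' (fun t => g (v (t - 1)) (v t))
        (Finset.mem_Icc.mpr (⟨by omega, le_refl (m+1)⟩ : 1 ≤ m + 1 ∧ m + 1 ≤ m + 1))
      simpa only [Nat.add_sub_cancel] using this
    rcases eq_or_ne (v m) (v (m+1)) with hlaststep | hlaststep
    · have h0m : v 0 ≠ v m := fun h => hv (h.trans hlaststep)
      calc δ (v 0) (v (m+1)) = δ (v 0) (v m) := by rw [hlaststep]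
        _ ≤ _ := le_trans (ih v h0m) hmono
    · rcases eq_or_ne (v 0) (v m) with h0m | h0m
      · calc δ (v 0) (v (m+1)) = δ (v m) (v (m+1)) := by rw [h0m]
          _ ≤ g (v m) (v (m+1)) := hg _ _ hlaststep
          _ ≤ _ := hlast
      · have htri := hδ.2 (v 0) (v m) (v (m+1)) h0m hlaststep hv
        refine le_trans htri (max_le ?_ ?_)
        · exact le_trans (ih v h0m) hmono
        · exact le_trans (hg _ _ hlaststep) hlast

lemma ultra_le_subdom_add [Fintype X] {ω δ : X → X → ℝ} (hδ : IsUltrametricMap δ)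
    {η : ℝ} (hη : ∀ a b : X, a ≠ b → |ω a b - δ a b| ≤ η) {x y : X} (hxy : x ≠ y) :
    δ x y ≤ subdomUltra ω x y + η := by
  obtain ⟨m, hm, v, hv0, hvm, hval⟩ := subdom_mem ω hxy
  have hg : ∀ a b : X, a ≠ b → δ a b ≤ ω a b + η := by
    intro a b hab
    have := hη a b hab
    have h2 := neg_abs_le (ω a b - δ a b)
    linarith [this, h2]
  have hvne : v 0 ≠ v m := by rw [hv0, hvm]; exact hxy
  have := ultra_path hδ (fun a b => ω a b + η) hg m hm v hvne
  rw [hv0, hvm] at this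
  refine le_trans this ?_
  apply Finset.sup'_le
  intro t ht
  have := Finset.le_sup' (fun t => ω (v (t - 1)) (v t)) ht
  rw [← hval] at this
  simpa using add_le_add_right this η

/-- **Chepoi–Fichet.** For a dissimilarity map ω on a finite set X with at
least two elements, with ω_U its subdominant ultrametric and
ε = (1/2)·max_{x ≠ y} (ω(x,y) − ω_U(x,y)), the map ω_U^{+ε} (which adds ε off the
diagonal) is an ultrametric, it is ℓ∞-closest to ω among all ultrametrics, and its
ℓ∞-distance to ω equals ε. -/
theorem stmt16 [Fintype X] [Nontrivial X] (ω : X → X → ℝ) (hω : IsDissimilarity ω)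
    (ε : ℝ)
    (hε : ε = (1 / 2) * sSup {r : ℝ | ∃ x y : X, x ≠ y ∧ r = ω x y - subdomUltra ω x y}) :
    IsUltrametricMap (fun x y => if x = y then 0 else subdomUltra ω x y + ε) ∧
    (∀ δ : X → X → ℝ, IsUltrametricMap δ →
      sSup {r : ℝ | ∃ x y : X, x ≠ y ∧ r = |ω x y - (subdomUltra ω x y + ε)|} ≤
        sSup {r : ℝ | ∃ x y : X, x ≠ y ∧ r = |ω x y - δ x y|}) ∧
    sSup {r : ℝ | ∃ x y : X, x ≠ y ∧ r = |ω x y - (subdomUltra ω x y + ε)|} = ε := by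
  have hsym : ∀ a b : X, ω a b = ω b a := hω.2
  set E : Set ℝ := {r : ℝ | ∃ x y : X, x ≠ y ∧ r = ω x y - subdomUltra ω x y} with hE
  set D : Set ℝ := {r : ℝ | ∃ x y : X, x ≠ y ∧ r = |ω x y - (subdomUltra ω x y + ε)|}
    with hD
  obtain ⟨a, b, hab⟩ := exists_pair_ne X
  have hEne : E.Nonempty := ⟨ω a b - subdomUltra ω a b, a, b, hab, rfl⟩
  have hEfin : E.Finite := by
    refine (Set.finite_range (fun p : X × X => ω p.1 p.2 - subdomUltra ω p.1 p.2)).subset ?_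
    rintro r ⟨x, y, hxy, rfl⟩
    exact ⟨(x, y), rfl⟩
  have hDne : D.Nonempty := ⟨|ω a b - (subdomUltra ω a b + ε)|, a, b, hab, rfl⟩
  have hDfin : D.Finite := by
    refine (Set.finite_range
      (fun p : X × X => |ω p.1 p.2 - (subdomUltra ω p.1 p.2 + ε)|)).subset ?_
    rintro r ⟨x, y, hxy, rfl⟩
    exact ⟨(x, y), rfl⟩
  have h2ε : sSup E = 2 * ε := by rw [hε]; ring
  have hle2ε : ∀ x y : X, x ≠ y → ω x y - subdomUltra ω x y ≤ 2 * ε := by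
    intro x y hxy
    rw [← h2ε]
    exact le_csSup hEfin.bddAbove ⟨x, y, hxy, rfl⟩
  have hge0 : ∀ x y : X, x ≠ y → 0 ≤ ω x y - subdomUltra ω x y := by
    intro x y hxy
    linarith [subdom_le ω hxy]
  have hε0 : 0 ≤ ε := by
    have := hge0 a b hab
    have := hle2ε a b hab
    linarith
  have hmemE : sSup E ∈ E := hEne.csSup_mem hEfin
  obtain ⟨p, q, hpq, hval⟩ := hmemE
  have hvalpq : ω p q - subdomUltra ω p q = 2 * ε := by rw [← hval, h2ε]
  have hdist : sSup D = ε := by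
    apply le_antisymm
    · apply csSup_le hDne
      rintro r ⟨x, y, hxy, rfl⟩
      rw [abs_le]
      constructor
      · linarith [hge0 x y hxy]
      · linarith [hle2ε x y hxy]
    · refine le_csSup hDfin.bddAbove ⟨p, q, hpq, ?_⟩
      have : ω p q - (subdomUltra ω p q + ε) = ε := by linarith
      rw [this, abs_of_nonneg hε0]
  refine ⟨⟨⟨fun x => by simp, fun x y => ?_⟩, fun x y z hxy hyz hxz => ?_⟩,
    fun δ hδ => ?_, hdist⟩
  · rcases eq_or_ne x y with rfl | h
    · simp
    · simp only [if_neg h, if_neg h.symm, subdom_symm ω hsym x y]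
  · simp only [if_neg hxy, if_neg hyz, if_neg hxz]
    have := subdom_triangle ω hxy hyz hxz
    rw [max_add_add_right]
    linarith
  · rw [hdist]
    set D' : Set ℝ := {r : ℝ | ∃ x y : X, x ≠ y ∧ r = |ω x y - δ x y|} with hD'
    have hD'fin : D'.Finite := by
      refine (Set.finite_range (fun pr : X × X => |ω pr.1 pr.2 - δ pr.1 pr.2|)).subset ?_
      rintro r ⟨x, y, hxy, rfl⟩
      exact ⟨(x, y), rfl⟩
    have hη : ∀ u v : X, u ≠ v → |ω u v - δ u v| ≤ sSup D' := by
      intro u v huv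
      exact le_csSup hD'fin.bddAbove ⟨u, v, huv, rfl⟩
    have h1 : δ p q ≤ subdomUltra ω p q + sSup D' := ultra_le_subdom_add hδ hη hpq
    have h2 : ω p q ≤ δ p q + sSup D' := by
      have := hη p q hpq
      have := le_abs_self (ω p q - δ p q)
      linarith
    linarith
end
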